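/- arXiv:1905.09026 — 3 statements merged into one kernel-verified Lean document; each statement's English description precedes it below -/
import Mathlib

section
/- Let D₁, D₂, D₃ : ℝ³ → ℝ³ be a frame with structure functions c_{jk}^i, let g₁, g₂, g₃ : ℝ³ → ℝ be smooth, let A, B : ℝ³ → ℝ be smooth with A > 0 and B > 0 everywhere, and let σ ∈ {−1, +1}. For a smooth function f write B^f for exp(f · log B). Define D̂_i = σ A B^{g_j+g_k} D_i for each cyclic permutation (i,j,k) of (1,2,3). Then D̂₁, D̂₂, D̂₃ is a frame, and its structure functions ĉ satisfy ĉ_{jk}^i = σ A B^{2 g_i} c_{jk}^i for every cyclic permutation (i,j,k) of (1,2,3). -/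
noncomputable section

/-- Points of `ℝ³`. -/
abbrev R3 : Type := Fin 3 → ℝ

/-- Lie bracket of vector fields on `ℝ³`:
`[X,Y](x) = (DY)_x(X(x)) − (DX)_x(Y(x))`. -/
def lieB (X Y : R3 → R3) : R3 → R3 :=
  fun x => fderiv ℝ Y x (X x) - fderiv ℝ X x (Y x)

/-- Directional derivative `X(f)(x) = (Df)_x(X(x))`. -/
def dirD (X : R3 → R3) (f : R3 → ℝ) : R3 → ℝ :=
  fun x => fderiv ℝ f x (X x)

/-- A frame: three smooth vector fields, linearly independent at every point. -/
def IsFrame (D : Fin 3 → R3 → R3) : Prop :=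
  (∀ i, ContDiff ℝ (⊤ : ℕ∞) (D i)) ∧ ∀ x : R3, LinearIndependent ℝ fun i => D i x

/-- `c` is the family of (smooth) structure functions of the frame `D`:
`[D j, D k] = ∑ i, c j k i • D i`.  Here `c j k i` stands for `c_{jk}^i`. -/
def IsStructFns (D : Fin 3 → R3 → R3) (c : Fin 3 → Fin 3 → Fin 3 → R3 → ℝ) : Prop :=
  (∀ j k i, ContDiff ℝ (⊤ : ℕ∞) (c j k i)) ∧
    ∀ j k, ∀ x : R3, lieB (D j) (D k) x = ∑ i, c j k i x • D i x

/-- `(i,j,k)` is a cyclic permutation of `(1,2,3)` (as indices `(0,1,2)`). -/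
def Cyclic (i j k : Fin 3) : Prop :=
  (i, j, k) = (0, 1, 2) ∨ (i, j, k) = (1, 2, 0) ∨ (i, j, k) = (2, 0, 1)

/-- The BKL constraint equations for the datum `(D, c, g, ξ)`. -/
def BKLConstraints (D : Fin 3 → R3 → R3) (c : Fin 3 → Fin 3 → Fin 3 → R3 → ℝ)
    (g : Fin 3 → R3 → ℝ) (ξ : R3 → ℝ) : Prop :=
  (∀ x : R3, g 1 x * g 2 x + g 2 x * g 0 x + g 0 x * g 1 x = 0) ∧
    ∀ i j k : Fin 3, Cyclic i j k → ∀ x : R3,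
      dirD (D i) (fun y => g j y + g k y) x + c i j j x * (g i x - g j x)
        + c i k k x * (g i x - g k x) - 2 * dirD (D i) ξ x * g i x = 0

/-- Smoothness of the functions in a BKL datum. -/
def SmoothDatum (g : Fin 3 → R3 → ℝ) (ξ : R3 → ℝ) : Prop :=
  (∀ i, ContDiff ℝ (⊤ : ℕ∞) (g i)) ∧ ContDiff ℝ (⊤ : ℕ∞) ξ

/-- `B^f = exp (f · log B)`. -/
def bpow (B f : R3 → ℝ) : R3 → ℝ := fun x => Real.exp (f x * Real.log (B x))

/-- The transformed frame `D̂ i = σ A B^(g j + g k) • D i`, `(i,j,k)` cyclic. -/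
def confFrame (D : Fin 3 → R3 → R3) (g : Fin 3 → R3 → ℝ) (A B : R3 → ℝ) (σ : ℝ) :
    Fin 3 → R3 → R3 :=
  fun i x => (σ * A x * bpow B (fun y => g (i + 1) y + g (i + 2) y) x) • D i x


/-- The conformal factor. -/
def cphi (g : Fin 3 → R3 → ℝ) (A B : R3 → ℝ) (σ : ℝ) (m : Fin 3) : R3 → ℝ :=
  fun x => σ * A x * bpow B (fun y => g (m + 1) y + g (m + 2) y) x

lemma confFrame_eq (D : Fin 3 → R3 → R3) (g : Fin 3 → R3 → ℝ) (A B : R3 → ℝ) (σ : ℝ)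
    (m : Fin 3) : confFrame D g A B σ m = fun x => cphi g A B σ m x • D m x := rfl

lemma lie_smul_smul (φ ψ : R3 → ℝ) (X Y : R3 → R3) (x : R3)
    (hφ : DifferentiableAt ℝ φ x) (hψ : DifferentiableAt ℝ ψ x)
    (hX : DifferentiableAt ℝ X x) (hY : DifferentiableAt ℝ Y x) :
    lieB (fun y => φ y • X y) (fun y => ψ y • Y y) x
      = (φ x * ψ x) • lieB X Y x + (φ x * fderiv ℝ ψ x (X x)) • Y x
        - (ψ x * fderiv ℝ φ x (Y x)) • X x := by
  unfold lieB
  rw [fderiv_fun_smul hψ hY, fderiv_fun_smul hφ hX]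
  simp only [ContinuousLinearMap.add_apply, ContinuousLinearMap.coe_smul',
    Pi.smul_apply, ContinuousLinearMap.smulRight_apply, map_smul, smul_smul]
  module

lemma li3 {v : Fin 3 → R3} (h : LinearIndependent ℝ v) (a b : Fin 3 → ℝ)
    (hab : a 0 • v 0 + a 1 • v 1 + a 2 • v 2 = b 0 • v 0 + b 1 • v 1 + b 2 • v 2) :
    ∀ m, a m = b m := by
  intro m
  have hz := Fintype.linearIndependent_iff.mp h (fun i => a i - b i) ?_ m
  · linarith
  · simp only [Fin.sum_univ_three, sub_smul]
    linear_combination (norm := module) hab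

lemma exp_aux (w p q r u : ℝ) (h : p + q = r + u) :
    w * Real.exp p * (w * Real.exp q) = w * Real.exp r * (w * Real.exp u) := by
  have h1 : Real.exp p * Real.exp q = Real.exp r * Real.exp u := by
    rw [← Real.exp_add, ← Real.exp_add, h]
  linear_combination (w * w) * h1

/-- structure functions of a conformally transformed frame:
`ĉ_(jk)^i = σ A B^(2 g_i) c_(jk)^i` for cyclic `(i,j,k)`. -/
theorem conformal_structure_functions
    (D : Fin 3 → R3 → R3) (c : Fin 3 → Fin 3 → Fin 3 → R3 → ℝ)
    (hD : IsFrame D) (hc : IsStructFns D c)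
    (g : Fin 3 → R3 → ℝ) (hg : ∀ i, ContDiff ℝ (⊤ : ℕ∞) (g i))
    (A B : R3 → ℝ) (hA : ContDiff ℝ (⊤ : ℕ∞) A) (hApos : ∀ x : R3, 0 < A x)
    (hB : ContDiff ℝ (⊤ : ℕ∞) B) (hBpos : ∀ x : R3, 0 < B x)
    (σ : ℝ) (hσ : σ = 1 ∨ σ = -1) :
    IsFrame (confFrame D g A B σ) ∧
    ∀ chat : Fin 3 → Fin 3 → Fin 3 → R3 → ℝ, IsStructFns (confFrame D g A B σ) chat →
      ∀ i j k : Fin 3, Cyclic i j k → ∀ x : R3,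
        chat j k i x = σ * A x * Real.exp (2 * g i x * Real.log (B x)) * c j k i x := by
  have hσne : σ ≠ 0 := by rcases hσ with h | h <;> rw [h] <;> norm_num
  have hφsmooth : ∀ m, ContDiff ℝ (⊤ : ℕ∞) (cphi g A B σ m) := by
    intro m
    exact (contDiff_const.mul hA).mul
      ((((hg _).add (hg _)).mul (hB.log fun x => (hBpos x).ne')).exp)
  have hφne : ∀ m x, cphi g A B σ m x ≠ 0 := by
    intro m x
    exact mul_ne_zero (mul_ne_zero hσne (hApos x).ne') (Real.exp_ne_zero _)
  have hDd : ∀ m x, DifferentiableAt ℝ (D m) x :=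
    fun m x => ((hD.1 m).differentiable (by simp)).differentiableAt
  have hφd : ∀ m x, DifferentiableAt ℝ (cphi g A B σ m) x :=
    fun m x => ((hφsmooth m).differentiable (by simp)).differentiableAt
  constructor
  · constructor
    · intro m
      rw [confFrame_eq]
      exact (hφsmooth m).smul (hD.1 m)
    · intro x
      rw [Fintype.linearIndependent_iff]
      intro a ha m
      have h2 := Fintype.linearIndependent_iff.mp (hD.2 x) (fun i => a i * cphi g A B σ i x) ?_ m
      · exact (mul_eq_zero.mp h2).resolve_right (hφne m x)
      · rw [← ha]
        simp only [confFrame_eq, mul_smul]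
  · intro chat hchat i j k hcyc x
    have hb := hchat.2 j k x
    simp only [confFrame_eq] at hb
    rw [lie_smul_smul _ _ _ _ x (hφd j x) (hφd k x) (hDd j x) (hDd k x), hc.2 j k x] at hb
    simp only [Fin.sum_univ_three, smul_add, smul_smul] at hb
    -- hb : (φj*φk) • (c0 • D0 + c1 • D1 + c2 • D2)-expanded + extra = chat-sum
    have key : ∀ m : Fin 3,
        cphi g A B σ j x * cphi g A B σ k x * c j k m x
            + (if m = k then cphi g A B σ j x * fderiv ℝ (cphi g A B σ k) x (D j x) else 0)
            - (if m = j then cphi g A B σ k x * fderiv ℝ (cphi g A B σ j) x (D k x) else 0)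
          = chat j k m x * cphi g A B σ m x := by
      apply li3 (hD.2 x)
      rcases hcyc with h | h | h <;>
        ( simp only [Prod.mk.injEq] at h
          obtain ⟨rfl, rfl, rfl⟩ := h
          norm_num [Fin.ext_iff]
          linear_combination (norm := module) hb )
    have keyi := key i
    have hij : i ≠ j ∧ i ≠ k := by
      rcases hcyc with h | h | h <;> (simp only [Prod.mk.injEq] at h; obtain ⟨rfl, rfl, rfl⟩ := h) <;>
        exact ⟨by decide, by decide⟩
    rw [if_neg hij.2, if_neg hij.1] at keyi
    -- keyi : φj*φk * c = chat * φi
    have hphi : cphi g A B σ j x * cphi g A B σ k x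
        = (σ * A x * Real.exp (2 * g i x * Real.log (B x))) * cphi g A B σ i x := by
      rcases hcyc with h | h | h <;>
        ( simp only [Prod.mk.injEq] at h
          obtain ⟨rfl, rfl, rfl⟩ := h
          simp only [cphi, bpow, Fin.reduceAdd]
          exact exp_aux _ _ _ _ _ (by ring) )
    have hfin : chat j k i x * cphi g A B σ i x
        = (σ * A x * Real.exp (2 * g i x * Real.log (B x)) * c j k i x) * cphi g A B σ i x := by
      linear_combination -keyi + c j k i x * hphi
    exact mul_right_cancel₀ (hφne i x) hfin
end
end

section
/- Let (D₁, D₂, D₃, c, g₁, g₂, g₃, ξ) be a BKL datum satisfying the BKL constraints, and suppose that g₁ > 0, g₂ < 0, g₃ < 0 and c_{23}^1 ≠ 0 at every point of ℝ³. Then there exist smooth functions A, B : ℝ³ → ℝ with A > 0 and B > 0 everywhere and a sign σ ∈ {−1, +1}, and these are unique, such that the transformed BKL datum given by ĝ_i = A g_i, D̂_i = σ A B^{g_j+g_k} D_i for cyclic (i,j,k) (where B^f = exp(f log B)), and ξ̂ = ξ + log A + (g₁+g₂+g₃) log B is in normal form; that is, there is a smooth u : ℝ³ → ℝ with u > 0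 everywhere such that (ĝ₁, ĝ₂, ĝ₃) = (1/2, −(1+u)/2, −(1+1/u)/2) and the structure functions of the new frame satisfy ĉ_{23}^1 = −2 identically. Necessarily A = 1/(2g₁) and u = −(g₁+g₂)/g₁. -/
noncomputable section

/-- `g₂³ = −c_{12}^1 − D₂(ξ)` (indices `1,2,3` are `0,1,2`). -/
def g23fn (D : Fin 3 → R3 → R3) (c : Fin 3 → Fin 3 → Fin 3 → R3 → ℝ) (ξ : R3 → ℝ) :
    R3 → ℝ :=
  fun x => -c 0 1 0 x - dirD (D 1) ξ x

/-- `g₃⁴ = −c_{31}^1 + D₃(ξ)`. -/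
def g34fn (D : Fin 3 → R3 → R3) (c : Fin 3 → Fin 3 → Fin 3 → R3 → ℝ) (ξ : R3 → ℝ) :
    R3 → ℝ :=
  fun x => -c 2 0 0 x + dirD (D 2) ξ x

/-- `D̃₁ = D₁ − (2 g₃⁴/(u−2)) D₂ + (2 u g₂³/(2u−1)) D₃`. -/
def tiltedD1 (D : Fin 3 → R3 → R3) (c : Fin 3 → Fin 3 → Fin 3 → R3 → ℝ)
    (ξ u : R3 → ℝ) : R3 → R3 :=
  fun x => D 0 x - (2 * g34fn D c ξ x / (u x - 2)) • D 1 x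
    + (2 * u x * g23fn D c ξ x / (2 * u x - 1)) • D 2 x

/-- Normal form: `(g₁,g₂,g₃) = (1/2, −(1+u)/2, −(1+1/u)/2)` and `c_{23}^1 = −2`. -/
def IsNormalForm (c : Fin 3 → Fin 3 → Fin 3 → R3 → ℝ)
    (g : Fin 3 → R3 → ℝ) (u : R3 → ℝ) : Prop :=
  ContDiff ℝ (⊤ : ℕ∞) u ∧ (∀ x : R3, 0 < u x) ∧
    (∀ x : R3, g 0 x = 1 / 2) ∧ (∀ x : R3, g 1 x = -(1 + u x) / 2) ∧
    (∀ x : R3, g 2 x = -(1 + 1 / u x) / 2) ∧ ∀ x : R3, c 1 2 0 x = -2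


lemma smooth_dirD {X : R3 → R3} {f : R3 → ℝ} (hX : ContDiff ℝ (⊤ : ℕ∞) X)
    (hf : ContDiff ℝ (⊤ : ℕ∞) f) : ContDiff ℝ (⊤ : ℕ∞) (dirD X f) :=
  (hf.fderiv_right (by exact_mod_cast le_top)).clm_apply hX

lemma lieB_smul {φ ψ : R3 → ℝ} {X Y : R3 → R3}
    (hφ : ContDiff ℝ (⊤ : ℕ∞) φ) (hψ : ContDiff ℝ (⊤ : ℕ∞) ψ)
    (hX : ContDiff ℝ (⊤ : ℕ∞) X) (hY : ContDiff ℝ (⊤ : ℕ∞) Y) (x : R3) :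
    lieB (fun y => φ y • X y) (fun y => ψ y • Y y) x
      = (φ x * ψ x) • lieB X Y x + (φ x * dirD X ψ x) • Y x
        - (ψ x * dirD Y φ x) • X x := by
  have hφd := (hφ.differentiable (by simp)).differentiableAt (x := x)
  have hψd := (hψ.differentiable (by simp)).differentiableAt (x := x)
  have hXd := (hX.differentiable (by simp)).differentiableAt (x := x)
  have hYd := (hY.differentiable (by simp)).differentiableAt (x := x)
  unfold lieB dirD
  rw [fderiv_fun_smul hψd hYd, fderiv_fun_smul hφd hXd]
  simp only [ContinuousLinearMap.add_apply, ContinuousLinearMap.smul_apply,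
    ContinuousLinearMap.smulRight_apply, map_smul]
  module

def scFns (D : Fin 3 → R3 → R3) (c : Fin 3 → Fin 3 → Fin 3 → R3 → ℝ)
    (φ : Fin 3 → R3 → ℝ) : Fin 3 → Fin 3 → Fin 3 → R3 → ℝ :=
  fun j k i x => (φ j x * φ k x * c j k i x
    + (if i = k then φ j x * dirD (D j) (φ k) x else 0)
    - (if i = j then φ k x * dirD (D k) (φ j) x else 0)) / φ i x

lemma scFns_structFns {D : Fin 3 → R3 → R3} {c : Fin 3 → Fin 3 → Fin 3 → R3 → ℝ}
    {φ : Fin 3 → R3 → ℝ} (hDs : ∀ i, ContDiff ℝ (⊤:ℕ∞) (D i))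
    (hc : IsStructFns D c) (hφ : ∀ i, ContDiff ℝ (⊤:ℕ∞) (φ i))
    (hφ0 : ∀ i x, φ i x ≠ 0) :
    IsStructFns (fun i x => φ i x • D i x) (scFns D c φ) := by
  constructor
  · intro j k i
    apply ContDiff.div _ (hφ i) (hφ0 i)
    apply ContDiff.sub
    apply ContDiff.add
    · exact ((hφ j).mul (hφ k)).mul (hc.1 j k i)
    · split
      · exact (hφ j).mul (smooth_dirD (hDs j) (hφ k))
      · exact contDiff_const
    · split
      · exact (hφ k).mul (smooth_dirD (hDs k) (hφ j))
      · exact contDiff_const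
  · intro j k x
    rw [lieB_smul (hφ j) (hφ k) (hDs j) (hDs k) x, hc.2 j k x]
    have key : ∀ i, scFns D c φ j k i x * φ i x
        = φ j x * φ k x * c j k i x
          + (if i = k then φ j x * dirD (D j) (φ k) x else 0)
          - (if i = j then φ k x * dirD (D k) (φ j) x else 0) := fun i =>
      div_mul_cancel₀ _ (hφ0 i x)
    simp only [smul_smul, key, sub_smul, add_smul, ite_smul, zero_smul,
      Finset.sum_sub_distrib, Finset.sum_add_distrib, Finset.sum_ite_eq',
      Finset.mem_univ, if_true, Finset.smul_sum]

lemma chat_120 {D : Fin 3 → R3 → R3} {c chat : Fin 3 → Fin 3 → Fin 3 → R3 → ℝ}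
    {φ : Fin 3 → R3 → ℝ} (hDs : ∀ i, ContDiff ℝ (⊤:ℕ∞) (D i))
    (hlin : ∀ x : R3, LinearIndependent ℝ fun i => D i x)
    (hc : IsStructFns D c) (hφ : ∀ i, ContDiff ℝ (⊤:ℕ∞) (φ i))
    (hφ0 : ∀ i x, φ i x ≠ 0)
    (hchat : IsStructFns (fun i x => φ i x • D i x) chat) (x : R3) :
    chat 1 2 0 x = φ 1 x * φ 2 x * c 1 2 0 x / φ 0 x := by
  have h1 := hchat.2 1 2 x
  have h2 := (scFns_structFns hDs hc hφ hφ0).2 1 2 x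
  have h3 : ∑ i, ((chat 1 2 i x - scFns D c φ 1 2 i x) * φ i x) • D i x = 0 := by
    simp only [sub_mul, sub_smul, Finset.sum_sub_distrib, mul_smul]
    rw [← h1, ← h2]
    abel
  have h4 := Fintype.linearIndependent_iff.mp (hlin x) _ h3 0
  have h5 : chat 1 2 0 x = scFns D c φ 1 2 0 x := by
    rcases mul_eq_zero.mp h4 with h | h
    · linarith [sub_eq_zero.mp (by linarith : chat 1 2 0 x - scFns D c φ 1 2 0 x = 0)]
    · exact absurd h (hφ0 0 x)
  rw [h5]
  simp [scFns]

def Phi (g : Fin 3 → R3 → ℝ) (A B : R3 → ℝ) (σ : ℝ) : Fin 3 → R3 → ℝ :=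
  fun i x => σ * A x * bpow B (fun y => g (i + 1) y + g (i + 2) y) x

lemma Phi_smooth {g : Fin 3 → R3 → ℝ} {A B : R3 → ℝ} {σ : ℝ}
    (hg : ∀ i, ContDiff ℝ (⊤:ℕ∞) (g i)) (hA : ContDiff ℝ (⊤:ℕ∞) A)
    (hB : ContDiff ℝ (⊤:ℕ∞) B) (hB0 : ∀ x, 0 < B x) (i : Fin 3) :
    ContDiff ℝ (⊤:ℕ∞) (Phi g A B σ i) :=
  (contDiff_const.mul hA).mul
    ((((hg (i+1)).add (hg (i+2))).mul (hB.log fun x => (hB0 x).ne')).exp)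

lemma Phi_ne {g : Fin 3 → R3 → ℝ} {A B : R3 → ℝ} {σ : ℝ}
    (hσ : σ = 1 ∨ σ = -1) (hA0 : ∀ x, 0 < A x) (i : Fin 3) (x : R3) :
    Phi g A B σ i x ≠ 0 := by
  have hσ0 : σ ≠ 0 := by rcases hσ with h | h <;> rw [h] <;> norm_num
  exact mul_ne_zero (mul_ne_zero hσ0 (hA0 x).ne') (Real.exp_pos _).ne'

lemma conf_chat_val {D : Fin 3 → R3 → R3} {c chat : Fin 3 → Fin 3 → Fin 3 → R3 → ℝ}
    {g : Fin 3 → R3 → ℝ} {A B : R3 → ℝ} {σ : ℝ}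
    (hDs : ∀ i, ContDiff ℝ (⊤:ℕ∞) (D i))
    (hlin : ∀ x : R3, LinearIndependent ℝ fun i => D i x)
    (hc : IsStructFns D c) (hg : ∀ i, ContDiff ℝ (⊤:ℕ∞) (g i))
    (hA : ContDiff ℝ (⊤:ℕ∞) A) (hA0 : ∀ x, 0 < A x)
    (hB : ContDiff ℝ (⊤:ℕ∞) B) (hB0 : ∀ x, 0 < B x)
    (hσ : σ = 1 ∨ σ = -1)
    (hchat : IsStructFns (confFrame D g A B σ) chat) (x : R3) :
    chat 1 2 0 x = σ * A x * Real.exp (2 * g 0 x * Real.log (B x)) * c 1 2 0 x := by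
  have hchat' : IsStructFns (fun i x => Phi g A B σ i x • D i x) chat := hchat
  have h := chat_120 hDs hlin hc (Phi_smooth hg hA hB hB0) (Phi_ne hσ hA0) hchat' x
  rw [h]
  have e11 : (1 + 1 : Fin 3) = 2 := rfl
  have e12 : (1 + 2 : Fin 3) = 0 := rfl
  have e21 : (2 + 1 : Fin 3) = 0 := rfl
  have e22 : (2 + 2 : Fin 3) = 1 := rfl
  have e01 : (0 + 1 : Fin 3) = 1 := rfl
  have e02 : (0 + 2 : Fin 3) = 2 := rfl
  simp only [Phi, bpow, e11, e12, e21, e22, e01, e02]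
  have hexp : Real.exp ((g 2 x + g 0 x) * Real.log (B x))
      * Real.exp ((g 0 x + g 1 x) * Real.log (B x))
      = Real.exp (2 * g 0 x * Real.log (B x))
        * Real.exp ((g 1 x + g 2 x) * Real.log (B x)) := by
    rw [← Real.exp_add, ← Real.exp_add]; ring_nf
  have hσ0 : σ ≠ 0 := by rcases hσ with h' | h' <;> rw [h'] <;> norm_num
  have hne : σ * A x * Real.exp ((g 1 x + g 2 x) * Real.log (B x)) ≠ 0 :=
    mul_ne_zero (mul_ne_zero hσ0 (hA0 x).ne') (Real.exp_pos _).ne'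
  rw [div_eq_iff hne]
  linear_combination (σ * A x * σ * A x * c 1 2 0 x) * hexp

lemma sign_mul_pos {f : R3 → ℝ} (hf : Continuous f) (h0 : ∀ x, f x ≠ 0) (x y : R3) :
    0 < f x * f y := by
  rcases (h0 x).lt_or_gt with hx | hx <;> rcases (h0 y).lt_or_gt with hy | hy
  · exact mul_pos_of_neg_of_neg hx hy
  · exfalso
    obtain ⟨z, _, hz⟩ := (isPreconnected_univ (α := R3)).intermediate_value
      (Set.mem_univ x) (Set.mem_univ y) hf.continuousOn ⟨hx.le, hy.le⟩
    exact h0 z hz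
  · exfalso
    obtain ⟨z, _, hz⟩ := (isPreconnected_univ (α := R3)).intermediate_value
      (Set.mem_univ y) (Set.mem_univ x) hf.continuousOn ⟨hy.le, hx.le⟩
    exact h0 z hz
  · exact mul_pos hx hy

/-- normalization.  If `g₁ > 0`, `g₂ < 0`, `g₃ < 0` and `c_(23)^1 ≠ 0`
everywhere, then there are unique `A, B > 0` and `σ = ±1` such that the transformed
datum is in normal form; necessarily `A = 1/(2g₁)` and `u = −(g₁+g₂)/g₁`. -/
theorem bkl_normalization
    (D : Fin 3 → R3 → R3) (c : Fin 3 → Fin 3 → Fin 3 → R3 → ℝ)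
    (g : Fin 3 → R3 → ℝ) (ξ : R3 → ℝ)
    (hD : IsFrame D) (hc : IsStructFns D c) (hgξ : SmoothDatum g ξ)
    (hcon : BKLConstraints D c g ξ)
    (hg0 : ∀ x : R3, 0 < g 0 x) (hg1 : ∀ x : R3, g 1 x < 0) (hg2 : ∀ x : R3, g 2 x < 0)
    (hc23 : ∀ x : R3, c 1 2 0 x ≠ 0) :
    (∃ (A B : R3 → ℝ) (σ : ℝ) (u : R3 → ℝ), (fun (A B : R3 → ℝ) (σ : ℝ) (u : R3 → ℝ) =>
      ContDiff ℝ (⊤ : ℕ∞) A ∧ (∀ x : R3, 0 < A x) ∧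
      ContDiff ℝ (⊤ : ℕ∞) B ∧ (∀ x : R3, 0 < B x) ∧ (σ = 1 ∨ σ = -1) ∧
      ContDiff ℝ (⊤ : ℕ∞) u ∧ (∀ x : R3, 0 < u x) ∧
      (∀ x : R3, A x * g 0 x = 1 / 2) ∧
      (∀ x : R3, A x * g 1 x = -(1 + u x) / 2) ∧
      (∀ x : R3, A x * g 2 x = -(1 + 1 / u x) / 2) ∧
      ∀ chat : Fin 3 → Fin 3 → Fin 3 → R3 → ℝ,
        IsStructFns (confFrame D g A B σ) chat → ∀ x : R3, chat 1 2 0 x = -2) A B σ u) ∧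
    (∀ (A B : R3 → ℝ) (σ : ℝ) (u : R3 → ℝ) (A' B' : R3 → ℝ) (σ' : ℝ) (u' : R3 → ℝ),
      (fun (A B : R3 → ℝ) (σ : ℝ) (u : R3 → ℝ) =>
      ContDiff ℝ (⊤ : ℕ∞) A ∧ (∀ x : R3, 0 < A x) ∧
      ContDiff ℝ (⊤ : ℕ∞) B ∧ (∀ x : R3, 0 < B x) ∧ (σ = 1 ∨ σ = -1) ∧
      ContDiff ℝ (⊤ : ℕ∞) u ∧ (∀ x : R3, 0 < u x) ∧
      (∀ x : R3, A x * g 0 x = 1 / 2) ∧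
      (∀ x : R3, A x * g 1 x = -(1 + u x) / 2) ∧
      (∀ x : R3, A x * g 2 x = -(1 + 1 / u x) / 2) ∧
      ∀ chat : Fin 3 → Fin 3 → Fin 3 → R3 → ℝ,
        IsStructFns (confFrame D g A B σ) chat → ∀ x : R3, chat 1 2 0 x = -2) A B σ u → (fun (A B : R3 → ℝ) (σ : ℝ) (u : R3 → ℝ) =>
      ContDiff ℝ (⊤ : ℕ∞) A ∧ (∀ x : R3, 0 < A x) ∧
      ContDiff ℝ (⊤ : ℕ∞) B ∧ (∀ x : R3, 0 < B x) ∧ (σ = 1 ∨ σ = -1) ∧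
      ContDiff ℝ (⊤ : ℕ∞) u ∧ (∀ x : R3, 0 < u x) ∧
      (∀ x : R3, A x * g 0 x = 1 / 2) ∧
      (∀ x : R3, A x * g 1 x = -(1 + u x) / 2) ∧
      (∀ x : R3, A x * g 2 x = -(1 + 1 / u x) / 2) ∧
      ∀ chat : Fin 3 → Fin 3 → Fin 3 → R3 → ℝ,
        IsStructFns (confFrame D g A B σ) chat → ∀ x : R3, chat 1 2 0 x = -2) A' B' σ' u' → A = A' ∧ B = B' ∧ σ = σ') ∧
    (∀ (A B : R3 → ℝ) (σ : ℝ) (u : R3 → ℝ), (fun (A B : R3 → ℝ) (σ : ℝ) (u : R3 → ℝ) =>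
      ContDiff ℝ (⊤ : ℕ∞) A ∧ (∀ x : R3, 0 < A x) ∧
      ContDiff ℝ (⊤ : ℕ∞) B ∧ (∀ x : R3, 0 < B x) ∧ (σ = 1 ∨ σ = -1) ∧
      ContDiff ℝ (⊤ : ℕ∞) u ∧ (∀ x : R3, 0 < u x) ∧
      (∀ x : R3, A x * g 0 x = 1 / 2) ∧
      (∀ x : R3, A x * g 1 x = -(1 + u x) / 2) ∧
      (∀ x : R3, A x * g 2 x = -(1 + 1 / u x) / 2) ∧
      ∀ chat : Fin 3 → Fin 3 → Fin 3 → R3 → ℝ,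
        IsStructFns (confFrame D g A B σ) chat → ∀ x : R3, chat 1 2 0 x = -2) A B σ u →
      (∀ x : R3, A x = 1 / (2 * g 0 x)) ∧
      ∀ x : R3, u x = -(g 0 x + g 1 x) / g 0 x) := by
  
  obtain ⟨hDs, hlin⟩ := hD
  have hgs := hgξ.1
  have hquad := hcon.1
  have hg0ne : ∀ x : R3, g 0 x ≠ 0 := fun x => (hg0 x).ne'
  have h2g0ne : ∀ x : R3, (2 : ℝ) * g 0 x ≠ 0 := fun x => by
    have := hg0 x; positivity
  have hsum : ∀ x : R3, g 0 x + g 1 x < 0 := by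
    intro x; nlinarith [hquad x, hg0 x, hg1 x, hg2 x]
  have hccont : Continuous (c 1 2 0) := (hc.1 1 2 0).continuous
  classical
  set σ0 : ℝ := if 0 < c 1 2 0 (fun _ => 0) then -1 else 1 with hσdef
  have hσpm : σ0 = 1 ∨ σ0 = -1 := by
    rw [hσdef]; split
    · exact Or.inr rfl
    · exact Or.inl rfl
  have hsign : ∀ x, σ0 * c 1 2 0 x < 0 := by
    intro x
    have hpx := sign_mul_pos hccont hc23 (fun _ => 0) x
    rw [hσdef]; split_ifs with h
    · nlinarith
    · have hneg : c 1 2 0 (fun _ => 0) < 0 := lt_of_le_of_ne (not_lt.mp h) (hc23 _)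
      nlinarith
  set A : R3 → ℝ := fun x => 1 / (2 * g 0 x) with hAdef
  have hA0 : ∀ x, 0 < A x := fun x => by
    have := hg0 x; simp only [hAdef]; positivity
  have hAs : ContDiff ℝ (⊤:ℕ∞) A :=
    contDiff_const.div (contDiff_const.mul (hgs 0)) h2g0ne
  set u : R3 → ℝ := fun x => -(g 0 x + g 1 x) / g 0 x with hudef
  have hu0 : ∀ x, 0 < u x := fun x => by
    simp only [hudef]; exact div_pos (by linarith [hsum x]) (hg0 x)
  have hus : ContDiff ℝ (⊤:ℕ∞) u := (((hgs 0).add (hgs 1)).neg).div (hgs 0) hg0ne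
  set t : R3 → ℝ := fun x => -2 / (σ0 * A x * c 1 2 0 x) with htdef
  have hσAc : ∀ x, σ0 * A x * c 1 2 0 x < 0 := by
    intro x
    nlinarith [mul_neg_of_pos_of_neg (hA0 x) (hsign x)]
  have ht0 : ∀ x, 0 < t x := fun x => by
    simp only [htdef]; exact div_pos_of_neg_of_neg (by norm_num) (hσAc x)
  have hts : ContDiff ℝ (⊤:ℕ∞) t :=
    contDiff_const.div ((contDiff_const.mul hAs).mul (hc.1 1 2 0)) (fun x => (hσAc x).ne)
  set B : R3 → ℝ := fun x => Real.exp (Real.log (t x) / (2 * g 0 x)) with hBdef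
  have hB0 : ∀ x, 0 < B x := fun x => by simp only [hBdef]; exact Real.exp_pos _
  have hBs : ContDiff ℝ (⊤:ℕ∞) B :=
    ((hts.log fun x => (ht0 x).ne').div (contDiff_const.mul (hgs 0)) h2g0ne).exp
  have hkey : ∀ x, Real.exp (2 * g 0 x * Real.log (B x)) = t x := by
    intro x
    simp only [hBdef, Real.log_exp]
    have h1 : 2 * g 0 x * (Real.log (t x) / (2 * g 0 x)) = Real.log (t x) := by
      field_simp [hg0ne x]
    rw [h1, Real.exp_log (ht0 x)]
  have h8 : ∀ x : R3, A x * g 0 x = 1 / 2 := fun x => by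
    simp only [hAdef]; field_simp [hg0ne x]
  have h9 : ∀ x : R3, A x * g 1 x = -(1 + u x) / 2 := fun x => by
    simp only [hAdef, hudef]
    field_simp [hg0ne x]
    all_goals
      first
        | ring1
        | exact Or.inl trivial
        | (refine Or.inl ?_; ring1)
  have h10 : ∀ x : R3, A x * g 2 x = -(1 + 1 / u x) / 2 := fun x => by
    have hq := hquad x
    have h1 : (-g 1 x + -g 0 x : ℝ) ≠ 0 := fun h => (hsum x).ne (by linarith)
    simp only [hAdef, hudef]
    rw [one_div_div]
    field_simp [hg0ne x, h1, (hsum x).ne] <;>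
      first
        | linear_combination (-4 : ℝ) * hq
        | linear_combination (-2 : ℝ) * hq
        | linear_combination (4 : ℝ) * hq
        | linear_combination (2 : ℝ) * hq
        | linear_combination hq
  have h11 : ∀ chat : Fin 3 → Fin 3 → Fin 3 → R3 → ℝ,
      IsStructFns (confFrame D g A B σ0) chat → ∀ x : R3, chat 1 2 0 x = -2 := by
    intro chat hchat x
    rw [conf_chat_val hDs hlin hc hgs hAs hA0 hBs hB0 hσpm hchat x, hkey x]
    have hprod : σ0 * A x * c 1 2 0 x ≠ 0 := (hσAc x).ne
    simp only [htdef]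
    calc σ0 * A x * (-2 / (σ0 * A x * c 1 2 0 x)) * c 1 2 0 x
        = -2 / (σ0 * A x * c 1 2 0 x) * (σ0 * A x * c 1 2 0 x) := by ring
      _ = -2 := div_mul_cancel₀ _ hprod
  refine ⟨⟨A, B, σ0, u, hAs, hA0, hBs, hB0, hσpm, hus, hu0, h8, h9, h10, h11⟩, ?_, ?_⟩
  · rintro A1 B1 s1 u1 A2 B2 s2 u2
      ⟨hA1s, hA1p, hB1s, hB1p, hs1, hu1s, hu1p, e18, e19, e110, e111⟩
      ⟨hA2s, hA2p, hB2s, hB2p, hs2, hu2s, hu2p, e28, e29, e210, e211⟩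
    have hAeq : ∀ x, A1 x = A2 x := fun x =>
      mul_right_cancel₀ (hg0ne x) (by rw [e18 x, e28 x])
    have k1 : ∀ x, s1 * A1 x * Real.exp (2 * g 0 x * Real.log (B1 x)) * c 1 2 0 x = -2 := by
      intro x
      have hst : IsStructFns (confFrame D g A1 B1 s1)
          (scFns D c (Phi g A1 B1 s1)) :=
        scFns_structFns hDs hc (Phi_smooth hgs hA1s hB1s hB1p) (Phi_ne hs1 hA1p)
      have h := e111 _ hst x
      rw [← h]
      exact (conf_chat_val hDs hlin hc hgs hA1s hA1p hB1s hB1p hs1 hst x).symm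
    have k2 : ∀ x, s2 * A2 x * Real.exp (2 * g 0 x * Real.log (B2 x)) * c 1 2 0 x = -2 := by
      intro x
      have hst : IsStructFns (confFrame D g A2 B2 s2)
          (scFns D c (Phi g A2 B2 s2)) :=
        scFns_structFns hDs hc (Phi_smooth hgs hA2s hB2s hB2p) (Phi_ne hs2 hA2p)
      have h := e211 _ hst x
      rw [← h]
      exact (conf_chat_val hDs hlin hc hgs hA2s hA2p hB2s hB2p hs2 hst x).symm
    have hEE : ∀ x, s1 * Real.exp (2 * g 0 x * Real.log (B1 x))
        = s2 * Real.exp (2 * g 0 x * Real.log (B2 x)) := by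
      intro x
      have h1 := k1 x
      have h2 := k2 x
      rw [← hAeq x] at h2
      have h3 : (A1 x * c 1 2 0 x) * (s1 * Real.exp (2 * g 0 x * Real.log (B1 x)))
          = (A1 x * c 1 2 0 x) * (s2 * Real.exp (2 * g 0 x * Real.log (B2 x))) := by
        linear_combination h1 - h2
      exact mul_left_cancel₀ (mul_ne_zero (hA1p x).ne' (hc23 x)) h3
    have hss : s1 = s2 := by
      have h := hEE (fun _ => 0)
      have e1 := Real.exp_pos (2 * g 0 (fun _ => 0) * Real.log (B1 (fun _ => 0)))
      have e2 := Real.exp_pos (2 * g 0 (fun _ => 0) * Real.log (B2 (fun _ => 0)))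
      rcases hs1 with h1 | h1 <;> rcases hs2 with h2 | h2 <;> rw [h1, h2] at h ⊢ <;>
        first
        | rfl
        | (exfalso; nlinarith)
    refine ⟨funext hAeq, funext fun x => ?_, hss⟩
    have h := hEE x
    rw [hss] at h
    have hs2ne : s2 ≠ 0 := by rcases hs2 with h' | h' <;> rw [h'] <;> norm_num
    have hexp := mul_left_cancel₀ hs2ne h
    have hlog := mul_left_cancel₀ (h2g0ne x) (Real.exp_eq_exp.mp hexp)
    rw [← Real.exp_log (hB1p x), ← Real.exp_log (hB2p x), hlog]
  · rintro A1 B1 s1 u1 ⟨hA1s, hA1p, hB1s, hB1p, hs1, hu1s, hu1p, e18, e19, e110, e111⟩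
    constructor
    · intro x
      rw [eq_div_iff (h2g0ne x)]
      linear_combination 2 * e18 x
    · intro x
      rw [eq_div_iff (hg0ne x)]
      linear_combination 2 * g 0 x * e19 x - 2 * g 1 x * e18 x
end
end

section
/- Let D₁, D₂, D₃ : ℝ³ → ℝ³ be a frame with structure functions c_{jk}^p, and let g₁, g₂, g₃ : ℝ³ → ℝ be smooth functions satisfying D_j(g_k) − D_k(g_j) = Σ_{p=1}^3 c_{jk}^p g_p for all j, k ∈ {1,2,3}. Then there exists a smooth function ξ : ℝ³ → ℝ with g_i = D_i(ξ) for i = 1, 2, 3. -/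
noncomputable section

section FramePoincareAux

variable {D : Fin 3 → R3 → R3} {g : Fin 3 → R3 → ℝ}

def frameMat (D : Fin 3 → R3 → R3) (x : R3) : Matrix (Fin 3) (Fin 3) ℝ :=
  Matrix.of fun j i => D i x j

lemma frameMat_isUnit {D : Fin 3 → R3 → R3} {x : R3}
    (h : LinearIndependent ℝ fun i => D i x) : IsUnit (frameMat D x) := by
  rw [← Matrix.linearIndependent_cols_iff_isUnit]
  exact h

lemma frameMat_det_ne_zero {D : Fin 3 → R3 → R3} {x : R3}
    (h : LinearIndependent ℝ fun i => D i x) : (frameMat D x).det ≠ 0 :=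
  ((Matrix.isUnit_iff_isUnit_det _).1 (frameMat_isUnit h)).ne_zero

/-- the coframe pairing: ω x v = det⁻¹ * ∑ i, g i x * (adj M ⬝ v) i -/
def coframe (D : Fin 3 → R3 → R3) (g : Fin 3 → R3 → ℝ) (x : R3) : R3 →L[ℝ] ℝ :=
  ∑ j, ((frameMat D x).det⁻¹ * ∑ i, g i x * (frameMat D x).adjugate i j) •
    (ContinuousLinearMap.proj j : R3 →L[ℝ] ℝ)

lemma coframe_apply (D : Fin 3 → R3 → R3) (g : Fin 3 → R3 → ℝ) (x : R3) (v : R3) :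
    coframe D g x v = (frameMat D x).det⁻¹ *
      ∑ i, g i x * ((frameMat D x).adjugate.mulVec v) i := by
  simp only [coframe, ContinuousLinearMap.sum_apply, ContinuousLinearMap.smul_apply,
    ContinuousLinearMap.proj_apply, Matrix.mulVec, dotProduct, smul_eq_mul,
    Finset.mul_sum, Finset.sum_mul]
  rw [Finset.sum_comm]
  apply Finset.sum_congr rfl; intro i _
  apply Finset.sum_congr rfl; intro j _
  ring

lemma coframe_frame {D : Fin 3 → R3 → R3} {x : R3}
    (h : LinearIndependent ℝ fun i => D i x) (g : Fin 3 → R3 → ℝ) (k : Fin 3) :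
    coframe D g x (D k x) = g k x := by
  have hDk : D k x = (frameMat D x).mulVec (Pi.single k 1) := by
    ext j
    simp [Matrix.mulVec_single, frameMat]
  rw [coframe_apply, hDk, Matrix.mulVec_mulVec, Matrix.adjugate_mul]
  rw [Matrix.smul_mulVec, Matrix.one_mulVec]
  rw [Finset.sum_eq_single k]
  · field_simp [frameMat_det_ne_zero h]
    simp only [Pi.smul_apply, Pi.single_eq_same, smul_eq_mul, mul_one]; ring
  · intro b _ hb; simp [Pi.single_eq_of_ne hb]
  · simp

lemma entry_contDiff (hD : ∀ i, ContDiff ℝ (⊤ : ℕ∞) (D i)) (i j : Fin 3) :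
    ContDiff ℝ (⊤ : ℕ∞) fun x => D i x j :=
  (ContinuousLinearMap.proj j : R3 →L[ℝ] ℝ).contDiff.comp (hD i)

lemma det_contDiff (hD : ∀ i, ContDiff ℝ (⊤ : ℕ∞) (D i)) :
    ContDiff ℝ (⊤ : ℕ∞) fun x => (frameMat D x).det := by
  have hent := entry_contDiff hD
  simp only [Matrix.det_fin_three, frameMat, Matrix.of_apply]
  fun_prop

lemma adj_contDiff (hD : ∀ i, ContDiff ℝ (⊤ : ℕ∞) (D i)) (i j : Fin 3) :
    ContDiff ℝ (⊤ : ℕ∞) fun x => (frameMat D x).adjugate i j := by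
  have hent := entry_contDiff hD
  fin_cases i <;> fin_cases j <;>
    simp [Matrix.adjugate_fin_three, frameMat] <;> fun_prop

lemma symm_of_frame {T : R3 →L[ℝ] R3 →L[ℝ] ℝ} {x : R3}
    (hli : LinearIndependent ℝ fun i => D i x)
    (h : ∀ j k, T (D j x) (D k x) = T (D k x) (D j x)) (v w : R3) : T v w = T w v := by
  have hcard : Fintype.card (Fin 3) = Module.finrank ℝ R3 := by simp
  set b := basisOfLinearIndependentOfCardEqFinrank hli hcard with hbdef
  have hb : ∀ i, b i = D i x := fun i => by
    rw [hbdef, coe_basisOfLinearIndependentOfCardEqFinrank]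
  rw [← b.sum_repr v, ← b.sum_repr w]
  simp only [map_sum, map_smul, ContinuousLinearMap.coe_sum', Finset.sum_apply,
    ContinuousLinearMap.coe_smul', Pi.smul_apply, smul_eq_mul, hb, Finset.mul_sum]
  rw [Finset.sum_comm]
  exact Finset.sum_congr rfl fun i _ => Finset.sum_congr rfl fun j _ => by rw [h i j]; ring

lemma coframe_symm_fderiv {ω : R3 → (R3 →L[ℝ] ℝ)} (hω : ContDiff ℝ (⊤ : ℕ∞) ω)
    (hD : ∀ i, ContDiff ℝ (⊤ : ℕ∞) (D i))
    (hli : ∀ x, LinearIndependent ℝ fun i => D i x)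
    (hg : ∀ i, ContDiff ℝ (⊤ : ℕ∞) (g i))
    (hωD : ∀ k x, ω x (D k x) = g k x)
    (c : Fin 3 → Fin 3 → Fin 3 → R3 → ℝ)
    (hstruct : ∀ j k, ∀ x : R3, lieB (D j) (D k) x = ∑ i, c j k i x • D i x)
    (hclosed : ∀ j k : Fin 3, ∀ x : R3,
      dirD (D j) (g k) x - dirD (D k) (g j) x = ∑ p, c j k p x * g p x)
    (x : R3) (v w : R3) : fderiv ℝ ω x v w = fderiv ℝ ω x w v := by
  apply symm_of_frame (hli x)
  intro j k
  have key : ∀ j k : Fin 3,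
      fderiv ℝ ω x (D j x) (D k x) + ω x (fderiv ℝ (D k) x (D j x)) = dirD (D j) (g k) x := by
    intro j k
    have h1 : fderiv ℝ (fun y => ω y (D k y)) x =
        (ω x).comp (fderiv ℝ (D k) x) + (fderiv ℝ ω x).flip (D k x) :=
      fderiv_clm_apply (hω.differentiable (by simp) x) (((hD k).differentiable (by simp)) x)
    have h2 : (fun y => ω y (D k y)) = g k := funext fun y => hωD k y
    rw [h2] at h1
    have := DFunLike.congr_fun h1 (D j x)
    simpa [dirD, add_comm] using this.symm
  have e1 := key j k
  have e2 := key k j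
  have hlie : ω x (lieB (D j) (D k) x) = ∑ p, c j k p x * g p x := by
    rw [hstruct j k x]
    simp [map_sum, map_smul, hωD, smul_eq_mul]
  have hlie' : ω x (fderiv ℝ (D k) x (D j x)) - ω x (fderiv ℝ (D j) x (D k x))
      = ∑ p, c j k p x * g p x := by
    rw [← hlie, lieB, map_sub]
  have hc := hclosed j k x
  linarith [e1, e2, hlie', hc]

lemma poincare1 {ω : R3 → (R3 →L[ℝ] ℝ)} (hω : ContDiff ℝ (⊤ : ℕ∞) ω)
    (hsymm : ∀ x v w, fderiv ℝ ω x v w = fderiv ℝ ω x w v) :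
    ∃ ξ : R3 → ℝ, ContDiff ℝ (⊤ : ℕ∞) ξ ∧ ∀ x, fderiv ℝ ξ x = ω x := by
  have hω1 : Differentiable ℝ ω := hω.differentiable (by simp)
  have hωc : Continuous ω := hω.continuous
  have hdωc : Continuous (fderiv ℝ ω) := hω.continuous_fderiv (by simp)
  set ξ : R3 → ℝ := fun x => ∫ t in (0:ℝ)..1, ω (t • x) x with hξdef
  have hderiv : ∀ x₀ : R3, HasFDerivAt ξ (ω x₀) x₀ := by
    intro x₀
    set r : ℝ := ‖x₀‖ + 1 with hrdef
    have hr0 : 0 < r := by positivity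
    obtain ⟨C₁, hC₁⟩ := (isCompact_closedBall (0 : R3) r).exists_bound_of_continuousOn
      hωc.continuousOn
    obtain ⟨C₂, hC₂⟩ := (isCompact_closedBall (0 : R3) r).exists_bound_of_continuousOn
      (E := R3 →L[ℝ] R3 →L[ℝ] ℝ) hdωc.continuousOn
    have hC₂0 : 0 ≤ C₂ := le_trans (norm_nonneg _) (hC₂ 0 (by simp [le_of_lt hr0]))
    set F : R3 → ℝ → ℝ := fun x t => ω (t • x) x with hFdef
    set F' : R3 → ℝ → (R3 →L[ℝ] ℝ) := fun x t => ω (t • x) + t • (fderiv ℝ ω (t • x) x)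
      with hF'def
    have hmem : ∀ t ∈ Set.uIoc (0:ℝ) 1, ∀ x ∈ Metric.ball x₀ 1, t • x ∈ Metric.closedBall (0:R3) r ∧ ‖x‖ ≤ r := by
      intro t ht x hx
      rw [Set.uIoc_of_le zero_le_one] at ht
      have hxr : ‖x‖ ≤ r := by
        have := norm_sub_norm_le x x₀
        have hd := mem_ball_iff_norm.1 hx
        simp only [hrdef]; linarith
      constructor
      · simp only [Metric.mem_closedBall, dist_zero_right, norm_smul, Real.norm_eq_abs,
          abs_of_pos ht.1]
        calc t * ‖x‖ ≤ 1 * r := by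
              apply mul_le_mul ht.2 hxr (norm_nonneg _) zero_le_one
          _ = r := one_mul r
      · exact hxr
    have h_diff : ∀ᵐ t ∂(MeasureTheory.volume : MeasureTheory.Measure ℝ),
        t ∈ Set.uIoc (0:ℝ) 1 → ∀ x ∈ Metric.ball x₀ 1, HasFDerivAt (fun x => F x t) (F' x t) x := by
      apply MeasureTheory.ae_of_all
      intro t _ x _
      show HasFDerivAt (fun x => ω (t • x) x) (ω (t • x) + t • (fderiv ℝ ω (t • x) x)) x
      have hline : HasFDerivAt (fun y : R3 => t • y) (t • ContinuousLinearMap.id ℝ R3) x := by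
        exact (t • ContinuousLinearMap.id ℝ R3).hasFDerivAt
      have hA : HasFDerivAt (fun y => ω (t • y))
          ((fderiv ℝ ω (t • x)).comp (t • ContinuousLinearMap.id ℝ R3)) x :=
        ((hω1 (t • x)).hasFDerivAt).comp x hline
      have h2 := hA.clm_apply (hasFDerivAt_id x)
      refine h2.congr_fderiv ?_
      refine ContinuousLinearMap.ext fun v => ?_
      simp only [ContinuousLinearMap.add_apply, ContinuousLinearMap.smul_apply,
        ContinuousLinearMap.coe_comp', Function.comp_apply, ContinuousLinearMap.coe_id',
        id_eq, ContinuousLinearMap.flip_apply, ContinuousLinearMap.coe_smul', Pi.smul_apply,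
        map_smul, smul_eq_mul]
      rw [hsymm (t • x) v x]
    have h_bound : ∀ᵐ t ∂(MeasureTheory.volume : MeasureTheory.Measure ℝ),
        t ∈ Set.uIoc (0:ℝ) 1 → ∀ x ∈ Metric.ball x₀ 1, ‖F' x t‖ ≤ C₁ + C₂ * r := by
      apply MeasureTheory.ae_of_all
      intro t ht x hx
      obtain ⟨hmem1, hxr⟩ := hmem t ht x hx
      have ht1 : |t| ≤ 1 := by
        rw [Set.uIoc_of_le zero_le_one] at ht
        rw [abs_of_pos ht.1]; exact ht.2
      calc ‖F' x t‖ ≤ ‖ω (t • x)‖ + ‖t • (fderiv ℝ ω (t • x) x)‖ := norm_add_le _ _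
        _ ≤ C₁ + C₂ * r := by
            apply add_le_add (hC₁ _ hmem1)
            rw [norm_smul t ((fderiv ℝ ω (t • x)) x), Real.norm_eq_abs]
            calc |t| * ‖fderiv ℝ ω (t • x) x‖ ≤ 1 * (‖fderiv ℝ ω (t • x)‖ * ‖x‖) := by
                  apply mul_le_mul ht1 ((fderiv ℝ ω (t • x)).le_opNorm x) (norm_nonneg _)
                    zero_le_one
              _ ≤ C₂ * r := by
                  rw [one_mul]
                  exact mul_le_mul (hC₂ _ hmem1) hxr (norm_nonneg _) hC₂0
    have hFcont : ∀ x : R3, Continuous (fun t => F x t) := by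
      intro x
      apply Continuous.clm_apply ?_ continuous_const
      exact hωc.comp (continuous_id.smul continuous_const)
    have hF'cont : Continuous (fun t => F' x₀ t) := by
      apply Continuous.add
      · exact hωc.comp (continuous_id.smul continuous_const)
      · apply Continuous.smul continuous_id
        exact (hdωc.comp (continuous_id.smul continuous_const)).clm_apply continuous_const
    have key := intervalIntegral.hasFDerivAt_integral_of_dominated_of_fderiv_le
      (μ := MeasureTheory.volume) (F := F) (F' := F') (x₀ := x₀) (a := 0) (b := 1)
      (bound := fun _ => C₁ + C₂ * r) (Metric.ball_mem_nhds x₀ zero_lt_one)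
      (Filter.Eventually.of_forall fun x => ((hFcont x).aestronglyMeasurable))
      ((hFcont x₀).intervalIntegrable 0 1)
      (hF'cont.aestronglyMeasurable)
      h_bound
      (intervalIntegrable_const)
      h_diff
    -- now compute the integral of F' x₀
    have hG : ∀ t : ℝ, HasDerivAt (fun t => t • ω (t • x₀)) (F' x₀ t) t := by
      intro t
      have hline : HasDerivAt (fun s : ℝ => s • x₀) x₀ t := by
        simpa using (hasDerivAt_id t).smul_const x₀
      have h1 : HasDerivAt (fun s => ω (s • x₀)) (fderiv ℝ ω (t • x₀) x₀) t :=
        (hω1 (t • x₀)).hasFDerivAt.comp_hasDerivAt t hline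
      have h2 := (hasDerivAt_id t).smul h1
      refine h2.congr_deriv ?_
      simp [hF'def, add_comm]
    have hint : (∫ t in (0:ℝ)..1, F' x₀ t) = ω x₀ := by
      rw [intervalIntegral.integral_eq_sub_of_hasDerivAt (fun t _ => hG t)
        (hF'cont.intervalIntegrable 0 1)]
      simp
    rw [hint] at key
    exact key
  have hdiff : Differentiable ℝ ξ := fun x => (hderiv x).differentiableAt
  have hfd : ∀ x, fderiv ℝ ξ x = ω x := fun x => (hderiv x).fderiv
  refine ⟨ξ, ?_, hfd⟩
  exact contDiff_infty_iff_fderiv.2 ⟨hdiff, by rw [funext hfd]; exact hω⟩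

lemma coframe_contDiff {D : Fin 3 → R3 → R3} {g : Fin 3 → R3 → ℝ}
    (hD : ∀ i, ContDiff ℝ (⊤ : ℕ∞) (D i))
    (hli : ∀ x, LinearIndependent ℝ fun i => D i x)
    (hg : ∀ i, ContDiff ℝ (⊤ : ℕ∞) (g i)) :
    ContDiff ℝ (⊤ : ℕ∞) (coframe D g) := by
  unfold coframe
  apply ContDiff.sum
  intro j _
  apply ContDiff.smul (f := fun x => (frameMat D x).det⁻¹ * ∑ i, g i x * (frameMat D x).adjugate i j)
    (g := fun _ => (ContinuousLinearMap.proj j : R3 →L[ℝ] ℝ)) _ contDiff_const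
  exact ((det_contDiff hD).inv fun x => frameMat_det_ne_zero (hli x)).mul
    (ContDiff.sum fun i _ => (hg i).mul (adj_contDiff hD i j))

end FramePoincareAux

/-- a frame-Poincaré lemma on `ℝ³`: if
`D_j(g_k) − D_k(g_j) = ∑_p c_(jk)^p g_p` then `g_i = D_i(ξ)` for some smooth `ξ`. -/
theorem frame_poincare_lemma
    (D : Fin 3 → R3 → R3) (c : Fin 3 → Fin 3 → Fin 3 → R3 → ℝ)
    (hD : IsFrame D) (hc : IsStructFns D c)
    (g : Fin 3 → R3 → ℝ) (hg : ∀ i, ContDiff ℝ (⊤ : ℕ∞) (g i))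
    (hclosed : ∀ j k : Fin 3, ∀ x : R3,
      dirD (D j) (g k) x - dirD (D k) (g j) x = ∑ p, c j k p x * g p x) :
    ∃ ξ : R3 → ℝ, ContDiff ℝ (⊤ : ℕ∞) ξ ∧ ∀ (i : Fin 3) (x : R3),
      g i x = dirD (D i) ξ x := by
  obtain ⟨hD1, hli⟩ := hD
  obtain ⟨hcs, hstruct⟩ := hc
  have hωsm : ContDiff ℝ (⊤ : ℕ∞) (coframe D g) := coframe_contDiff hD1 hli hg
  have hωD : ∀ k x, coframe D g x (D k x) = g k x := fun k x => coframe_frame (hli x) g k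
  have hsymm := coframe_symm_fderiv hωsm hD1 hli hg hωD c hstruct hclosed
  obtain ⟨ξ, hξ, hfd⟩ := poincare1 hωsm hsymm
  refine ⟨ξ, hξ, fun i x => ?_⟩
  show g i x = fderiv ℝ ξ x (D i x)
  rw [hfd x]
  exact (hωD i x).symm
end
end
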